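/- Let γ > 0, ν ≥ 0, c₂ > 0, q₂ ∈ [0,1) and h₃ ∈ ℝ, and assume 2γ > c₂·(1 − q₂). Set A = √(c₂(1−q₂)), B = h₃·√(c₂q₂), C = 4γ, D = ( −h₃·√q₂ − 2√(γν) )/√(1−q₂), E = ( −h₃·√q₂ + 2√(γν) )/√(1−q₂). Then ∫_ℝ exp( −c₂·min( ν − ( √(1−q₂)·h + √q₂·h₃ )²/(4γ), 0 ) ) dγ₁(h) = I₁ + I₂, where I₁ = ( √C / (2·√(C − 2A²)) ) · exp( −c₂·ν + B²/(C − 2A²) ) · (2 − Q) with Q = erf( (C·E − 2A²·E − 2A·B)/(√2·√C·√(C − 2A²)) ) − erf( (C·D − 2A²·D − 2A·B)/(√2·√C·√(C − 2A²)) ), and I₂ = (1/2)·erfc(D/√2) − (1/2)·erfc(E/√2). -/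

import Mathlib

open MeasureTheory ProbabilityTheory Real
open scoped NNReal ENNReal

/-- The error function `erf x = (2/√π) ∫₀ˣ e^{-t²} dt`. -/
noncomputable def erf (x : ℝ) : ℝ := (2 / Real.sqrt π) * ∫ t in (0:ℝ)..x, Real.exp (-t ^ 2)

/-- The complementary error function `erfc x = 1 - erf x`. -/
noncomputable def erfc (x : ℝ) : ℝ := 1 - erf x

lemma gauss_std_integral (f : ℝ → ℝ) :
    ∫ x, f x ∂(gaussianReal 0 1) =
      ∫ x, f x * ((Real.sqrt (2 * π))⁻¹ * Real.exp (-x ^ 2 / 2)) := by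
  have hm : Measurable fun x : ℝ => (gaussianPDFReal 0 1 x).toNNReal :=
    measurable_real_toNNReal.comp (measurable_gaussianPDFReal 0 1)
  rw [gaussianReal_of_var_ne_zero 0 one_ne_zero,
    show gaussianPDF 0 1 = fun x => ((gaussianPDFReal 0 1 x).toNNReal : ℝ≥0∞) from rfl,
    integral_withDensity_eq_integral_smul hm f]
  congr 1; funext x
  rw [NNReal.smul_def, Real.coe_toNNReal _ (gaussianPDFReal_nonneg 0 1 x)]
  simp only [gaussianPDFReal, NNReal.coe_one, mul_one, sub_zero, smul_eq_mul]
  ring_nf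

lemma erf_integral (a b : ℝ) :
    ∫ t in a..b, Real.exp (-t ^ 2) = Real.sqrt π / 2 * (erf b - erf a) := by
  have hc : Continuous fun t : ℝ => Real.exp (-t ^ 2) := by continuity
  have h : ((∫ t in (0:ℝ)..b, Real.exp (-t ^ 2)) - ∫ t in (0:ℝ)..a, Real.exp (-t ^ 2))
      = ∫ t in a..b, Real.exp (-t ^ 2) :=
    intervalIntegral.integral_interval_sub_left (hc.intervalIntegrable 0 b)
      (hc.intervalIntegrable 0 a)
  have hπ : Real.sqrt π ≠ 0 := by positivity
  rw [← h, erf, erf]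
  field_simp

lemma interval_exp_quadratic (β k a b : ℝ) (hβ : 0 < β) :
    ∫ x in a..b, Real.exp (-(β * (x - k)) ^ 2)
      = Real.sqrt π / (2 * β) * (erf (β * (b - k)) - erf (β * (a - k))) := by
  have h1 : ∫ x in a..b, Real.exp (-(β * (x - k)) ^ 2)
      = ∫ x in a - k..b - k, Real.exp (-(β * x) ^ 2) :=
    intervalIntegral.integral_comp_sub_right (fun x => Real.exp (-(β * x) ^ 2)) k
  rw [h1, intervalIntegral.integral_comp_mul_left (fun t => Real.exp (-t ^ 2)) hβ.ne',
    erf_integral, smul_eq_mul]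
  have h2 : Real.sqrt π / (2 * β) = β⁻¹ * (Real.sqrt π / 2) := by field_simp [mul_comm]
  rw [h2, mul_assoc]

lemma line_exp_quadratic (β k : ℝ) (hβ : 0 < β) :
    ∫ x : ℝ, Real.exp (-(β * (x - k)) ^ 2) = Real.sqrt π / β := by
  have h : (fun x : ℝ => Real.exp (-(β * (x - k)) ^ 2))
      = fun x => (fun y => Real.exp (-(β ^ 2) * y ^ 2)) (x - k) := by
    funext x; congr 1; ring
  rw [h, integral_sub_right_eq_self (fun y => Real.exp (-(β ^ 2) * y ^ 2)) k,
    integral_gaussian, Real.sqrt_div' π (by positivity), Real.sqrt_sq hβ.le]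

lemma integrable_exp_quadratic (β k : ℝ) (hβ : 0 < β) :
    Integrable (fun x : ℝ => Real.exp (-(β * (x - k)) ^ 2)) := by
  have h : (fun x : ℝ => Real.exp (-(β * (x - k)) ^ 2))
      = fun x => (fun y => Real.exp (-(β ^ 2) * y ^ 2)) (x - k) := by
    funext x; congr 1; ring
  rw [h]
  exact (integrable_exp_neg_mul_sq (by positivity)).comp_sub_right k

set_option maxHeartbeats 1000000 in
/-- Evaluation of `E_{U₂} Z₀^{(2)}`, the inner Gaussian average of the
zero-coordinate partition term at the second level of lifting. -/
theorem stmt14 (γ ν c₂ q₂ h₃ : ℝ) (hγ : 0 < γ) (hν : 0 ≤ ν) (hc : 0 < c₂)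
    (hq₂ : q₂ ∈ Set.Ico (0:ℝ) 1) (hkey : c₂ * (1 - q₂) < 2 * γ)
    (A B C D E : ℝ)
    (hA : A = Real.sqrt (c₂ * (1 - q₂)))
    (hB : B = h₃ * Real.sqrt (c₂ * q₂))
    (hC : C = 4 * γ)
    (hD : D = (-(h₃ * Real.sqrt q₂) - 2 * Real.sqrt (γ * ν)) / Real.sqrt (1 - q₂))
    (hE : E = (-(h₃ * Real.sqrt q₂) + 2 * Real.sqrt (γ * ν)) / Real.sqrt (1 - q₂))
    (Q I₁ I₂ : ℝ)
    (hQ : Q = erf ((C * E - 2 * A ^ 2 * E - 2 * A * B) /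
          (Real.sqrt 2 * Real.sqrt C * Real.sqrt (C - 2 * A ^ 2)))
      - erf ((C * D - 2 * A ^ 2 * D - 2 * A * B) /
          (Real.sqrt 2 * Real.sqrt C * Real.sqrt (C - 2 * A ^ 2))))
    (hI₁ : I₁ = (Real.sqrt C / (2 * Real.sqrt (C - 2 * A ^ 2))) *
        Real.exp (-(c₂ * ν) + B ^ 2 / (C - 2 * A ^ 2)) * (2 - Q))
    (hI₂ : I₂ = (1 / 2) * erfc (D / Real.sqrt 2) - (1 / 2) * erfc (E / Real.sqrt 2)) :
    ∫ h : ℝ, Real.exp (-c₂ *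
        min (ν - (Real.sqrt (1 - q₂) * h + Real.sqrt q₂ * h₃) ^ 2 / (4 * γ)) 0)
      ∂(gaussianReal 0 1) = I₁ + I₂ := by
  obtain ⟨hq0, hq1⟩ := hq₂
  have hq1' : (0:ℝ) < 1 - q₂ := by linarith
  set s := Real.sqrt (1 - q₂) with hsdef
  set r := Real.sqrt q₂ with hrdef
  set T := 2 * Real.sqrt (γ * ν) with hTdef
  have hs : 0 < s := Real.sqrt_pos.mpr hq1'
  have hs2 : s ^ 2 = 1 - q₂ := Real.sq_sqrt hq1'.le
  have hr0 : 0 ≤ r := Real.sqrt_nonneg _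
  have hr2 : r ^ 2 = q₂ := Real.sq_sqrt hq0
  have hT0 : 0 ≤ T := by rw [hTdef]; positivity
  have hT2 : T ^ 2 = 4 * (γ * ν) := by
    rw [hTdef, mul_pow, Real.sq_sqrt (by positivity)]; ring
  clear_value s r T
  have hW : 0 < 4 * γ - 2 * c₂ * s ^ 2 := by rw [hs2]; linarith
  have hCpos : 0 < C := by rw [hC]; linarith
  have hA2 : A ^ 2 = c₂ * (1 - q₂) := by rw [hA]; exact Real.sq_sqrt (by positivity)
  have hCA : C - 2 * A ^ 2 = 4 * γ - 2 * c₂ * s ^ 2 := by rw [hC, hA2, hs2]; ring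
  have hB2 : B ^ 2 = c₂ * r ^ 2 * h₃ ^ 2 := by
    rw [hB, mul_pow, Real.sq_sqrt (by positivity), hr2]; ring
  have hAB : A * B = c₂ * s * r * h₃ := by
    rw [hA, hB, Real.sqrt_mul hc.le (1 - q₂), Real.sqrt_mul hc.le q₂, ← hsdef, ← hrdef]
    have h2 : Real.sqrt c₂ * Real.sqrt c₂ = c₂ := Real.mul_self_sqrt hc.le
    linear_combination (s * r * h₃) * h2
  have hDE : D ≤ E := by
    rw [hD, hE]
    exact (div_le_div_iff_of_pos_right hs).mpr (by linarith)
  have hmem : ∀ x : ℝ, x ∈ Set.Icc D E ↔ (s * x + r * h₃) ^ 2 ≤ T ^ 2 := by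
    intro x
    rw [Set.mem_Icc, hD, hE, div_le_iff₀ hs, le_div_iff₀ hs]
    constructor
    · rintro ⟨h1', h2'⟩; nlinarith
    · intro hx
      constructor
      · nlinarith [sq_nonneg (s * x + r * h₃ + T)]
      · nlinarith [sq_nonneg (s * x + r * h₃ - T)]
  have hval : ∀ x : ℝ, x ∉ Set.Icc D E →
      min (ν - (s * x + r * h₃) ^ 2 / (4 * γ)) 0 = ν - (s * x + r * h₃) ^ 2 / (4 * γ) := by
    intro x hx
    apply min_eq_left
    have h1' : T ^ 2 < (s * x + r * h₃) ^ 2 := lt_of_not_ge (fun h => hx ((hmem x).mpr h))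
    rw [hT2] at h1'
    rw [sub_nonpos, le_div_iff₀ (by positivity : (0:ℝ) < 4 * γ)]
    nlinarith
  have hval2 : ∀ x ∈ Set.Icc D E, min (ν - (s * x + r * h₃) ^ 2 / (4 * γ)) 0 = 0 := by
    intro x hx
    apply min_eq_right
    have h1' := (hmem x).mp hx
    rw [hT2] at h1'
    rw [sub_nonneg, div_le_iff₀ (by positivity : (0:ℝ) < 4 * γ)]
    nlinarith
  set β := Real.sqrt (4 * γ - 2 * c₂ * s ^ 2) / (Real.sqrt 2 * Real.sqrt C) with hβdef
  have hβ : 0 < β := div_pos (Real.sqrt_pos.mpr hW) (by positivity)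
  have hβ2 : β ^ 2 = (4 * γ - 2 * c₂ * s ^ 2) / (8 * γ) := by
    rw [hβdef, div_pow, mul_pow, Real.sq_sqrt hW.le, Real.sq_sqrt (by norm_num : (0:ℝ) ≤ 2),
      Real.sq_sqrt hCpos.le, hC]; ring
  set k := 2 * c₂ * s * r * h₃ / (4 * γ - 2 * c₂ * s ^ 2) with hkdef
  set K := Real.exp (-(c₂ * ν) + B ^ 2 / (C - 2 * A ^ 2)) with hKdef
  clear_value β k K
  have hexp : ∀ x : ℝ, (-c₂ * (ν - (s * x + r * h₃) ^ 2 / (4 * γ))) + (-x ^ 2 / 2)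
      = (-(c₂ * ν) + B ^ 2 / (C - 2 * A ^ 2)) + (-(β * (x - k)) ^ 2) := by
    intro x
    have h1 : (β * (x - k)) ^ 2 = (4 * γ - 2 * c₂ * s ^ 2) / (8 * γ) * (x - k) ^ 2 := by
      rw [mul_pow, hβ2]
    rw [h1, hCA, hB2, hkdef]
    have hWne : 4 * γ - 2 * c₂ * s ^ 2 ≠ 0 := hW.ne'
    field_simp
    have hi : (4 * γ - 2 * c₂ * s ^ 2) * (4 * γ - 2 * c₂ * s ^ 2)⁻¹ = 1 := mul_inv_cancel₀ hWne
    linear_combination (-(32 * c₂ * s * x * r * h₃ + 16 * c₂ * r ^ 2 * h₃ ^ 2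
      - 32 * c₂ ^ 2 * s ^ 2 * r ^ 2 * h₃ ^ 2 * (4 * γ - 2 * c₂ * s ^ 2)⁻¹)) * hi
  have hsplit : ∀ x : ℝ,
      Real.exp (-c₂ * min (ν - (s * x + r * h₃) ^ 2 / (4 * γ)) 0)
          * ((Real.sqrt (2 * π))⁻¹ * Real.exp (-x ^ 2 / 2))
      = (Real.sqrt (2 * π))⁻¹ * K * Real.exp (-(β * (x - k)) ^ 2)
        + Set.indicator (Set.Icc D E)
            (fun y => (Real.sqrt (2 * π))⁻¹ * Real.exp (-y ^ 2 / 2)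
              - (Real.sqrt (2 * π))⁻¹ * K * Real.exp (-(β * (y - k)) ^ 2)) x := by
    intro x
    have hG : Real.exp (-c₂ * (ν - (s * x + r * h₃) ^ 2 / (4 * γ)))
          * ((Real.sqrt (2 * π))⁻¹ * Real.exp (-x ^ 2 / 2))
        = (Real.sqrt (2 * π))⁻¹ * K * Real.exp (-(β * (x - k)) ^ 2) := by
      rw [hKdef]
      calc Real.exp (-c₂ * (ν - (s * x + r * h₃) ^ 2 / (4 * γ)))
            * ((Real.sqrt (2 * π))⁻¹ * Real.exp (-x ^ 2 / 2))
          = (Real.sqrt (2 * π))⁻¹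
              * Real.exp ((-c₂ * (ν - (s * x + r * h₃) ^ 2 / (4 * γ))) + (-x ^ 2 / 2)) := by
            rw [Real.exp_add]; ring
        _ = (Real.sqrt (2 * π))⁻¹
              * Real.exp ((-(c₂ * ν) + B ^ 2 / (C - 2 * A ^ 2)) + (-(β * (x - k)) ^ 2)) := by
            rw [hexp x]
        _ = (Real.sqrt (2 * π))⁻¹ * Real.exp (-(c₂ * ν) + B ^ 2 / (C - 2 * A ^ 2))
              * Real.exp (-(β * (x - k)) ^ 2) := by
            rw [Real.exp_add]; ring
    by_cases hx : x ∈ Set.Icc D E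
    · rw [Set.indicator_of_mem hx, hval2 x hx, mul_zero, Real.exp_zero, one_mul]
      ring
    · rw [Set.indicator_of_notMem hx, hval x hx, add_zero, hG]
  have hGint : Integrable
      (fun x : ℝ => (Real.sqrt (2 * π))⁻¹ * K * Real.exp (-(β * (x - k)) ^ 2)) :=
    (integrable_exp_quadratic β k hβ).const_mul _
  have hcont1 : Continuous fun y : ℝ => (Real.sqrt (2 * π))⁻¹ * Real.exp (-y ^ 2 / 2) := by
    fun_prop
  have hcont2 : Continuous
      fun y : ℝ => (Real.sqrt (2 * π))⁻¹ * K * Real.exp (-(β * (y - k)) ^ 2) := by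
    fun_prop
  have hIndint : Integrable (Set.indicator (Set.Icc D E)
      (fun y => (Real.sqrt (2 * π))⁻¹ * Real.exp (-y ^ 2 / 2)
        - (Real.sqrt (2 * π))⁻¹ * K * Real.exp (-(β * (y - k)) ^ 2))) :=
    ((hcont1.sub hcont2).integrableOn_Icc).integrable_indicator measurableSet_Icc
  rw [gauss_std_integral]
  simp only [hsplit]
  rw [integral_add hGint hIndint, integral_indicator measurableSet_Icc,
    integral_Icc_eq_integral_Ioc, ← intervalIntegral.integral_of_le hDE,
    integral_const_mul, line_exp_quadratic β k hβ,
    intervalIntegral.integral_sub (hcont1.intervalIntegrable D E)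
      (hcont2.intervalIntegrable D E),
    intervalIntegral.integral_const_mul, intervalIntegral.integral_const_mul,
    interval_exp_quadratic β k D E hβ]
  have hP2 : (fun x : ℝ => Real.exp (-x ^ 2 / 2))
      = fun x => Real.exp (-((Real.sqrt 2)⁻¹ * (x - 0)) ^ 2) := by
    funext x; congr 1
    rw [mul_pow, sub_zero, inv_pow, Real.sq_sqrt (by norm_num : (0:ℝ) ≤ 2)]
    ring
  rw [hP2, interval_exp_quadratic (Real.sqrt 2)⁻¹ 0 D E (by positivity)]
  -- rewrite erf arguments
  have hw2 : Real.sqrt (2 * π) = Real.sqrt 2 * Real.sqrt π :=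
    Real.sqrt_mul (by norm_num) π
  have hwne : Real.sqrt (4 * γ - 2 * c₂ * s ^ 2) ≠ 0 := by positivity
  have h2ne : Real.sqrt 2 ≠ 0 := by positivity
  have hCne : Real.sqrt C ≠ 0 := by positivity
  have hπne : Real.sqrt π ≠ 0 := by positivity
  have harg : ∀ y : ℝ, (C * y - 2 * A ^ 2 * y - 2 * A * B) /
      (Real.sqrt 2 * Real.sqrt C * Real.sqrt (C - 2 * A ^ 2)) = β * (y - k) := by
    intro y
    have hnum : C * y - 2 * A ^ 2 * y - 2 * A * B
        = (4 * γ - 2 * c₂ * s ^ 2) * y - 2 * (c₂ * s * r * h₃) := by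
      linear_combination y * hCA - 2 * hAB
    rw [hnum, hCA, hβdef, hkdef]
    have hww : Real.sqrt (4 * γ - 2 * c₂ * s ^ 2) * Real.sqrt (4 * γ - 2 * c₂ * s ^ 2)
        = 4 * γ - 2 * c₂ * s ^ 2 := Real.mul_self_sqrt hW.le
    field_simp
    linear_combination (-1 : ℝ)
      * (4 * γ * y - 2 * c₂ * s * r * h₃ - 2 * c₂ * s ^ 2 * y) * hww
  have hargE := harg E
  have hargD := harg D
  rw [hI₁, hI₂, hQ, hargE, hargD, hCA, erfc, erfc]
  have hdivE : (Real.sqrt 2)⁻¹ * (E - 0) = E / Real.sqrt 2 := by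
    rw [sub_zero, inv_mul_eq_div]
  have hdivD : (Real.sqrt 2)⁻¹ * (D - 0) = D / Real.sqrt 2 := by
    rw [sub_zero, inv_mul_eq_div]
  have hhalf : Real.sqrt π / (2 * (Real.sqrt 2)⁻¹) = Real.sqrt π * Real.sqrt 2 / 2 := by
    rw [show (2 * (Real.sqrt 2)⁻¹ : ℝ) = 2 / Real.sqrt 2 by ring, div_div_eq_mul_div]
  rw [hdivE, hdivD, hhalf, hβdef, hw2]
  field_simp
  ring
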